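/- In the one-dimensional non-Archimedean Hecke algebra, for all λ ≥ 0: ∑_{ν=0}^∞ e_λ(p^{-ν})²·dh(ν) = e_λ(p^{-0}) = e_λ evaluated at ν = 0, i.e., ‖e_λ‖² = e_λ(0); explicitly, N_λ − N_{λ-1} = ∑_{ν≥λ} (N_λ 1_{ν≥λ} − N_{λ-1}1_{ν≥λ-1})² dh(ν) for λ ≥ 1. -/

import Mathlib

/-- `N_λ = |P^{n-1}_{O/℘^λ}|`: `N_0 = 1` and `N_λ = (1-P^{-n})/(1-P^{-1})·P^{(n-1)λ}`. -/
noncomputable def Nproj (P : ℝ) (n l : ℕ) : ℝ :=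
  if l = 0 then 1 else (1 - P⁻¹ ^ n) / (1 - P⁻¹) * (P ^ (n - 1)) ^ l

/-- The minimal idempotent `e_λ(p^{-ν}) = N_λ 1_{ν≥λ} - N_{λ-1} 1_{ν≥λ-1}` (λ ≥ 1),
`e_0 ≡ 1`. -/
noncomputable def eIdem (P : ℝ) (n l ν : ℕ) : ℝ :=
  if l = 0 then 1
  else (if l ≤ ν then Nproj P n l else 0) - (if l - 1 ≤ ν then Nproj P n (l - 1) else 0)

/-- The projected Haar measure: `dh(0) = (1-P^{-(n-1)})/(1-P^{-n})` and
`dh(ν) = (1-P^{-1})(1-P^{-(n-1)})/(1-P^{-n})·P^{-(n-1)ν}` for `ν ≥ 1`. -/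
noncomputable def dhMeas (P : ℝ) (n ν : ℕ) : ℝ :=
  if ν = 0 then (1 - P⁻¹ ^ (n - 1)) / (1 - P⁻¹ ^ n)
  else (1 - P⁻¹) * (1 - P⁻¹ ^ (n - 1)) / (1 - P⁻¹ ^ n) * (P⁻¹ ^ (n - 1)) ^ ν

/-- Pure algebra for the case `λ ≥ 2`. -/
lemma alg_key (A c s r X Y w : ℝ) (hXY : X * Y = 1) (hsr : s * r = 1)
    (hAc : A * c = 1 - r) (hAcw : A * c * w = 1) :
    (A * X) ^ 2 * (c * Y) + (A * (s * X) - A * X) ^ 2 * (c * (r * Y)) * w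
      = A * (s * X) - A * X := by
  linear_combination (A ^ 2 * c * X + A * X * r * (s - 1) ^ 2) * hXY
    + (A * X * (s - 1) - A * X) * hsr + A * X * hAc
    + A * X ^ 2 * Y * r * (s - 1) ^ 2 * hAcw

/-- `‖e_λ‖² = e_λ(𝟎)`: the squared norm of the idempotent equals its value at the origin
(the relative position `p^{-∞}`), i.e. `1` for `λ = 0` and `N_λ - N_{λ-1}` for `λ ≥ 1`. -/
theorem stmt14 (P : ℝ) (hP : 1 < P) (n : ℕ) (hn : 2 ≤ n) :
    (∑' ν : ℕ, eIdem P n 0 ν ^ 2 * dhMeas P n ν = 1) ∧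
      ∀ l : ℕ, 1 ≤ l →
        ∑' ν : ℕ, eIdem P n l ν ^ 2 * dhMeas P n ν = Nproj P n l - Nproj P n (l - 1) := by
  have hP0 : 0 < P := lt_trans one_pos hP
  have hPne : P ≠ 0 := hP0.ne'
  set q : ℝ := P⁻¹ with hqdef
  have hq0 : (0:ℝ) < q := inv_pos.2 hP0
  have hq1 : q < 1 := inv_lt_one_of_one_lt₀ hP
  set r : ℝ := q ^ (n - 1) with hrdef
  set s : ℝ := P ^ (n - 1) with hsdef
  have hsne : s ≠ 0 := pow_ne_zero _ hPne
  have hr0 : (0:ℝ) ≤ r := pow_nonneg hq0.le _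
  have hr1 : r < 1 := pow_lt_one₀ hq0.le hq1 (by omega)
  have hrne : (1:ℝ) - r ≠ 0 := sub_ne_zero.2 hr1.ne'
  have hqn1 : q ^ n < 1 := pow_lt_one₀ hq0.le hq1 (by omega)
  have hqnne : (1:ℝ) - q ^ n ≠ 0 := sub_ne_zero.2 hqn1.ne'
  have hqne : (1:ℝ) - q ≠ 0 := sub_ne_zero.2 hq1.ne'
  have hqr : q * r = q ^ n := by
    rw [hrdef, ← pow_succ']
    congr 1
    omega
  have hsr : s * r = 1 := by
    rw [hsdef, hrdef, hqdef, ← mul_pow, mul_inv_cancel₀ hPne, one_pow]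
  set c : ℝ := (1 - q) * (1 - r) / (1 - q ^ n) with hcdef
  set A : ℝ := (1 - q ^ n) / (1 - q) with hAdef
  have hAc : A * c = 1 - r := by
    rw [hAdef, hcdef]; field_simp
  have hAcw : A * c * (1 - r)⁻¹ = 1 := by
    rw [hAc, mul_inv_cancel₀ hrne]
  have hgeo : ∑' ν : ℕ, r ^ ν = (1 - r)⁻¹ := tsum_geometric_of_lt_one hr0 hr1
  have hgeoS : Summable (fun ν : ℕ => r ^ ν) := summable_geometric_of_lt_one hr0 hr1
  constructor
  · have hf : (fun ν => eIdem P n 0 ν ^ 2 * dhMeas P n ν) = fun ν => dhMeas P n ν := by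
      funext ν; simp [eIdem]
    rw [hf]
    have hshift : (fun ν : ℕ => dhMeas P n (ν + 1)) = fun ν => (c * r) * r ^ ν := by
      funext ν
      simp only [dhMeas, Nat.succ_ne_zero, if_false]
      rw [← hqdef, ← hrdef, hcdef, pow_succ]
      ring
    have hS1 : Summable fun ν : ℕ => dhMeas P n (ν + 1) := by
      rw [hshift]; exact hgeoS.mul_left _
    have hS : Summable fun ν : ℕ => dhMeas P n ν := (summable_nat_add_iff 1).1 hS1
    rw [Summable.tsum_eq_zero_add hS]
    have htail : ∑' ν : ℕ, dhMeas P n (ν + 1) = (c * r) * (1 - r)⁻¹ := by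
      conv_lhs => rw [show (fun ν : ℕ => dhMeas P n (ν + 1)) = fun ν => (c * r) * r ^ ν from hshift]
      rw [tsum_mul_left, hgeo]
    rw [htail]
    have hd0 : dhMeas P n 0 = (1 - r) / (1 - q ^ n) := by
      simp only [dhMeas, eq_self_iff_true, if_true]; rfl
    rw [hd0, hcdef]
    rw [← hqr] at hqnne ⊢
    have hrq : (1:ℝ) - r * q ≠ 0 := by rw [mul_comm]; exact hqnne
    field_simp
    ring
  · intro l hl
    have hlne : l ≠ 0 := by omega
    set f : ℕ → ℝ := fun ν => eIdem P n l ν ^ 2 * dhMeas P n ν with hfdef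
    set K : ℝ := (Nproj P n l - Nproj P n (l - 1)) ^ 2 * (c * r ^ l) with hKdef
    have hshift : ∀ ν : ℕ, f (ν + l) = K * r ^ ν := by
      intro ν
      have h1 : eIdem P n l (ν + l) = Nproj P n l - Nproj P n (l - 1) := by
        simp only [eIdem]
        rw [if_neg hlne, if_pos (by omega), if_pos (by omega)]
      have h2 : dhMeas P n (ν + l) = c * (r ^ l * r ^ ν) := by
        simp only [dhMeas]
        rw [if_neg (by omega), ← hqdef, ← hrdef, hcdef, pow_add]
        ring
      show eIdem P n l (ν + l) ^ 2 * dhMeas P n (ν + l) = K * r ^ ν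
      rw [h1, h2, hKdef]; ring
    have hS' : Summable fun ν => f (ν + l) := by
      have he : (fun ν => f (ν + l)) = fun ν => K * r ^ ν := funext hshift
      rw [he]; exact hgeoS.mul_left _
    have hS : Summable f := (summable_nat_add_iff l).1 hS'
    have htail : ∑' ν : ℕ, f (ν + l) = K * (1 - r)⁻¹ := by
      rw [funext hshift, tsum_mul_left, hgeo]
    rw [show (∑' ν : ℕ, eIdem P n l ν ^ 2 * dhMeas P n ν) = ∑' ν, f ν from rfl,
      ← Summable.sum_add_tsum_nat_add l hS, htail]
    obtain ⟨m, rfl⟩ : ∃ m, l = m + 1 := ⟨l - 1, by omega⟩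
    have hsum0 : ∑ i ∈ Finset.range (m + 1), f i = f m := by
      rw [Finset.sum_range_succ]
      have hz : ∑ i ∈ Finset.range m, f i = 0 := by
        apply Finset.sum_eq_zero
        intro i hi
        have hi' := Finset.mem_range.1 hi
        show eIdem P n (m + 1) i ^ 2 * dhMeas P n i = 0
        simp only [eIdem]
        rw [if_neg hlne, if_neg (by omega), if_neg (by omega)]
        simp
      rw [hz, zero_add]
    have hfm : f m = Nproj P n m ^ 2 * dhMeas P n m := by
      show eIdem P n (m + 1) m ^ 2 * dhMeas P n m = _
      simp only [eIdem]
      rw [if_neg hlne, if_neg (by omega), if_pos (by omega)]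
      simp only [Nat.add_sub_cancel]
      ring
    rw [hsum0, hfm, hKdef]
    simp only [Nat.add_sub_cancel]
    have hNsucc : ∀ k : ℕ, Nproj P n (k + 1) = A * s ^ (k + 1) := by
      intro k
      simp only [Nproj, Nat.succ_ne_zero, if_false]; rfl
    rcases Nat.eq_zero_or_pos m with hm0 | hm1
    · -- l = 1 : the boundary term uses dh(0)
      subst hm0
      have hN1 : Nproj P n (0 + 1) = A * s := by
        rw [hNsucc 0, pow_one]
      have hN0 : Nproj P n 0 = 1 := by simp [Nproj]
      have hd0 : dhMeas P n 0 = (1 - r) / (1 - q ^ n) := by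
        simp only [dhMeas, eq_self_iff_true, if_true]; rfl
      rw [hN1, hN0, hd0]
      -- goal : 1^2 * ((1-r)/(1-q^n)) + (A*s - 1)^2 * (c*r) * (1-r)⁻¹ = A*s - 1
      have hr_s : r = s⁻¹ := eq_inv_of_mul_eq_one_left (by linarith [hsr] : r * s = 1)
      have hqn_qs : q ^ n = q * s⁻¹ := by rw [← hqr, hr_s]
      have hqsne : (1:ℝ) - q * s⁻¹ ≠ 0 := by rw [← hqn_qs]; exact hqnne
      have hsqne : s - q ≠ 0 := by
        have : s - q = s * (1 - q * s⁻¹) := by field_simp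
        rw [this]; exact mul_ne_zero hsne hqsne
      rw [hcdef, hAdef, hqn_qs, hr_s]
      have hs1ne : s - 1 ≠ 0 := by
        have : s - 1 = s * (1 - s⁻¹) := by field_simp
        rw [this]
        refine mul_ne_zero hsne ?_
        rw [← hr_s]; exact hrne
      field_simp
      ring_nf
      field_simp
      ring
    · -- l = m+1 with m ≥ 1 : the boundary term uses the geometric branch of dh
      have hNm : Nproj P n m = A * s ^ m := by
        obtain ⟨t, rfl⟩ : ∃ t, m = t + 1 := ⟨m - 1, by omega⟩
        exact hNsucc t
      have hdm : dhMeas P n m = c * r ^ m := by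
        simp only [dhMeas]
        rw [if_neg (by omega), ← hqdef, ← hrdef, hcdef]
      rw [hNm, hNsucc m, hdm]
      have hXY : s ^ m * r ^ m = 1 := by rw [← mul_pow, hsr, one_pow]
      have key := alg_key A c s r (s ^ m) (r ^ m) (1 - r)⁻¹ hXY hsr hAc hAcw
      calc (A * s ^ m) ^ 2 * (c * r ^ m)
            + (A * s ^ (m + 1) - A * s ^ m) ^ 2 * (c * r ^ (m + 1)) * (1 - r)⁻¹
          = (A * s ^ m) ^ 2 * (c * r ^ m)
            + (A * (s * s ^ m) - A * s ^ m) ^ 2 * (c * (r * r ^ m)) * (1 - r)⁻¹ := by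
            rw [pow_succ, pow_succ]; ring_nf
        _ = A * (s * s ^ m) - A * s ^ m := key
        _ = A * s ^ (m + 1) - A * s ^ m := by rw [pow_succ]; ring
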